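/- Let T be a tree that is not a path such that no vertex of T has degree 2 and every vertex of degree at least 3 is adjacent to at least one leaf. Suppose further that every vertex of degree at least 3 is adjacent to at most two leaves. Let x be the number of vertices of degree at least 3 adjacent to exactly one leaf and let z be the number of vertices of degree at least 3 adjacent to exactly two leaves, and suppose z ≥ 2. Then dim_1(T) ≥ 2z + x − 1. -/

import Mathlib

/-- The `k`-truncated distance: `d_k(x,y) = min{d(x,y), k+1}`. -/
noncomputable def SimpleGraph.distK {V : Type*} (G : SimpleGraph V) (k : ℕ) (x y : V) : ℕ :=
  min (G.dist x y) (k + 1)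

/-- `S` is a distance-`k` resolving set of `G`: every pair of distinct vertices is
resolved by some vertex of `S` with respect to the `k`-truncated distance. -/
def SimpleGraph.IsDistKResolvingSet {V : Type*} (G : SimpleGraph V) (k : ℕ) (S : Set V) : Prop :=
  ∀ x y : V, x ≠ y → ∃ z ∈ S, G.distK k x z ≠ G.distK k y z

/-- The distance-`k` metric dimension of `G`. -/
noncomputable def SimpleGraph.distKDim {V : Type*} (G : SimpleGraph V) (k : ℕ) : ℕ :=
  sInf {m : ℕ | ∃ S : Set V, S.ncard = m ∧ G.IsDistKResolvingSet k S}

/-- `S` is a resolving set of `G`. -/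
def SimpleGraph.IsResolvingSet {V : Type*} (G : SimpleGraph V) (S : Set V) : Prop :=
  ∀ x y : V, x ≠ y → ∃ z ∈ S, G.dist x z ≠ G.dist y z

/-- The metric dimension of `G`. -/
noncomputable def SimpleGraph.metricDim {V : Type*} (G : SimpleGraph V) : ℕ :=
  sInf {m : ℕ | ∃ S : Set V, S.ncard = m ∧ G.IsResolvingSet S}

/-- A leaf: a vertex of degree one. -/
def IsLeafVx {V : Type*} (G : SimpleGraph V) (u : V) : Prop :=
  (G.neighborSet u).ncard = 1

/-- The set of leaf neighbors of a vertex. -/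
def leafNbrs {V : Type*} (G : SimpleGraph V) (v : V) : Set V :=
  {u ∈ G.neighborSet v | IsLeafVx G u}

open scoped Classical in
/-- Support of a leaf vertex: its unique neighbor. -/
noncomputable def suppVx {V : Type*} (G : SimpleGraph V) (u : V) : V :=
  if h : ∃ v, G.neighborSet u = {v} then h.choose else u

lemma suppVx_spec {V : Type*} {G : SimpleGraph V} {u : V} (h : IsLeafVx G u) :
    G.neighborSet u = {suppVx G u} := by
  classical
  obtain ⟨v, hv⟩ := Set.ncard_eq_one.mp h
  have hex : ∃ v, G.neighborSet u = {v} := ⟨v, hv⟩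
  rw [suppVx]
  rw [dif_pos hex]
  exact hex.choose_spec

lemma leaf_dist {V : Type*} {G : SimpleGraph V} (hc : G.Connected) {u v w : V}
    (h : G.neighborSet u = {v}) (hw : w ≠ u) :
    G.dist u w = G.dist v w + 1 := by
  have hadj : G.Adj u v := by
    have : v ∈ G.neighborSet u := by rw [h]; exact rfl
    exact this
  have h1 : G.dist u w ≤ 1 + G.dist v w := by
    calc G.dist u w ≤ G.dist u v + G.dist v w := hc.dist_triangle
    _ = 1 + G.dist v w := by rw [SimpleGraph.dist_eq_one_iff_adj.mpr hadj]
  obtain ⟨p, hp⟩ := hc.exists_walk_length_eq_dist u w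
  cases p with
  | nil => exact absurd rfl hw
  | @cons _ b _ hadj' q =>
    have hb : b = v := by
      have : b ∈ G.neighborSet u := hadj'
      rw [h] at this; exact this
    have h2 : G.dist v w ≤ q.length := hb ▸ SimpleGraph.dist_le q
    rw [SimpleGraph.Walk.length_cons] at hp
    omega

lemma distK_adj' {V : Type*} {G : SimpleGraph V} {u v : V} (h : G.Adj u v) :
    G.distK 1 u v = 1 := by
  show min (G.dist u v) 2 = 1
  rw [SimpleGraph.dist_eq_one_iff_adj.mpr h]
  omega

lemma distK_leaf_far {V : Type*} {G : SimpleGraph V} (hc : G.Connected) {u v w : V}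
    (h : G.neighborSet u = {v}) (hw : w ≠ u) (hw2 : w ≠ v) :
    G.distK 1 u w = 2 := by
  have h1 : G.dist u w = G.dist v w + 1 := leaf_dist hc h hw
  have h2 : 0 < G.dist v w := hc.pos_dist_of_ne (Ne.symm hw2)
  show min (G.dist u w) 2 = 2
  omega

lemma resolver_mem {V : Type*} {G : SimpleGraph V} (hc : G.Connected) {u v u' v' zz : V}
    (hu : G.neighborSet u = {v}) (hu' : G.neighborSet u' = {v'})
    (hne : G.distK 1 u zz ≠ G.distK 1 u' zz) :
    zz = u ∨ zz = v ∨ zz = u' ∨ zz = v' := by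
  by_contra hcon
  push_neg at hcon
  obtain ⟨h1, h2, h3, h4⟩ := hcon
  exact hne ((distK_leaf_far hc hu h1 h2).trans (distK_leaf_far hc hu' h3 h4).symm)

/-- let `T` be a tree that is not a path, with no vertex of degree 2, in
which every vertex of degree at least 3 is adjacent to at least one and at most two
leaves. If `x` vertices of degree at least 3 are adjacent to exactly one leaf, `z`
vertices of degree at least 3 are adjacent to exactly two leaves, and `z ≥ 2`, then
`dim_1(T) ≥ 2z + x - 1`. -/
theorem stmt_19 {V : Type*} [Fintype V] (G : SimpleGraph V)
    (hT : G.IsTree)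
    (hnp : ¬ ∃ n : ℕ, Nonempty (G ≃g SimpleGraph.pathGraph n))
    (hdeg2 : ∀ v : V, (G.neighborSet v).ncard ≠ 2)
    (hleaf : ∀ v : V, 3 ≤ (G.neighborSet v).ncard →
      1 ≤ (leafNbrs G v).ncard ∧ (leafNbrs G v).ncard ≤ 2)
    (x z : ℕ)
    (hx : x = {v : V | 3 ≤ (G.neighborSet v).ncard ∧ (leafNbrs G v).ncard = 1}.ncard)
    (hz : z = {v : V | 3 ≤ (G.neighborSet v).ncard ∧ (leafNbrs G v).ncard = 2}.ncard)
    (hz2 : 2 ≤ z) :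
    2 * z + x - 1 ≤ G.distKDim 1 := by
  classical
  have hc : G.Connected := hT.isConnected
  show 2 * z + x - 1 ≤ sInf {m : ℕ | ∃ S : Set V, S.ncard = m ∧ G.IsDistKResolvingSet 1 S}
  apply le_csInf
  · refine ⟨Set.univ.ncard, Set.univ, rfl, ?_⟩
    intro a b hab
    refine ⟨a, Set.mem_univ a, ?_⟩
    have h0 : G.distK 1 a a = 0 := by
      show min (G.dist a a) 2 = 0
      rw [SimpleGraph.dist_self]
      omega
    have h1 : 0 < G.dist b a := hc.pos_dist_of_ne (Ne.symm hab)
    have h2 : 0 < G.distK 1 b a := by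
      show 0 < min (G.dist b a) 2
      omega
    omega
  · rintro m ⟨S, rfl, hS⟩
    set A : Finset V :=
      Finset.univ.filter (fun v => 3 ≤ (G.neighborSet v).ncard ∧ (leafNbrs G v).ncard = 2)
      with hAdef
    set B : Finset V :=
      Finset.univ.filter (fun v => 3 ≤ (G.neighborSet v).ncard ∧ (leafNbrs G v).ncard = 1)
      with hBdef
    have hzA : z = A.card := by
      rw [hz, Set.ncard_eq_toFinset_card', Set.toFinset_setOf]
    have hxB : x = B.card := by
      rw [hx, Set.ncard_eq_toFinset_card', Set.toFinset_setOf]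
    set Lv : V → Finset V := fun v => (leafNbrs G v).toFinset with hLvdef
    have hmem : ∀ v u, u ∈ Lv v → G.neighborSet u = {v} ∧ IsLeafVx G u := by
      intro v u hu
      have hu' : u ∈ leafNbrs G v := by
        rw [hLvdef] at hu
        simpa using hu
      obtain ⟨hadj, hlf⟩ := hu'
      have h1 := suppVx_spec hlf
      have hv : v ∈ G.neighborSet u := by
        rw [SimpleGraph.mem_neighborSet] at hadj ⊢
        exact hadj.symm
      rw [h1, Set.mem_singleton_iff] at hv
      refine ⟨?_, hlf⟩
      rw [hv]
      exact h1
    have hdisj : ∀ v ∈ A ∪ B, ∀ v' ∈ A ∪ B, v ≠ v' → Disjoint (Lv v) (Lv v') := by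
      intro v _ v' _ hvv
      rw [Finset.disjoint_left]
      intro u hu hu'
      have h1 := (hmem v u hu).1
      have h2 := (hmem v' u hu').1
      rw [h1] at h2
      exact hvv (Set.singleton_eq_singleton_iff.mp h2)
    set T : Finset V := (A ∪ B).biUnion Lv with hTdef
    have hABd : Disjoint A B := by
      rw [Finset.disjoint_left]
      intro a ha hb
      rw [hAdef, Finset.mem_filter] at ha
      rw [hBdef, Finset.mem_filter] at hb
      omega
    have hTcard : T.card = 2 * z + x := by
      rw [hTdef, Finset.card_biUnion hdisj, Finset.sum_union hABd]
      have hsA : ∀ v ∈ A, (Lv v).card = 2 := by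
        intro v hv
        rw [hAdef, Finset.mem_filter] at hv
        rw [hLvdef]
        rw [← Set.ncard_eq_toFinset_card']
        exact hv.2.2
      have hsB : ∀ v ∈ B, (Lv v).card = 1 := by
        intro v hv
        rw [hBdef, Finset.mem_filter] at hv
        rw [hLvdef]
        rw [← Set.ncard_eq_toFinset_card']
        exact hv.2.2
      rw [Finset.sum_congr rfl hsA, Finset.sum_congr rfl hsB, Finset.sum_const,
        Finset.sum_const, smul_eq_mul, smul_eq_mul, mul_one, mul_comm, hzA, hxB]
    have hT_elim : ∀ u ∈ T, ∃ v, G.neighborSet u = {v} ∧ suppVx G u = v ∧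
        3 ≤ (G.neighborSet v).ncard := by
      intro u hu
      rw [hTdef, Finset.mem_biUnion] at hu
      obtain ⟨v, hvAB, huLv⟩ := hu
      obtain ⟨hnb, hlf⟩ := hmem v u huLv
      have hsupp : suppVx G u = v := by
        have hss := suppVx_spec hlf
        rw [hnb] at hss
        exact (Set.singleton_eq_singleton_iff.mp hss).symm
      have hdeg : 3 ≤ (G.neighborSet v).ncard := by
        rw [Finset.mem_union, hAdef, hBdef, Finset.mem_filter, Finset.mem_filter] at hvAB
        rcases hvAB with h | h
        · exact h.2.1
        · exact h.2.1
      exact ⟨v, hnb, hsupp, hdeg⟩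
    set Good : Finset V := T.filter (fun u => u ∈ S ∨ suppVx G u ∈ S) with hGdef
    set Bad : Finset V := T.filter (fun u => ¬(u ∈ S ∨ suppVx G u ∈ S)) with hBaddef
    have hsplit : Good.card + Bad.card = T.card :=
      Finset.card_filter_add_card_filter_not (fun u => u ∈ S ∨ suppVx G u ∈ S)
    have hBad1 : Bad.card ≤ 1 := by
      rw [Finset.card_le_one]
      intro a ha b hb
      by_contra hab
      rw [hBaddef, Finset.mem_filter] at ha hb
      obtain ⟨haT, haS⟩ := ha
      obtain ⟨hbT, hbS⟩ := hb
      push_neg at haS hbS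
      obtain ⟨va, hnba, hsa, _⟩ := hT_elim a haT
      obtain ⟨vb, hnbb, hsb, _⟩ := hT_elim b hbT
      obtain ⟨zz, hzzS, hzzne⟩ := hS a b hab
      rcases resolver_mem hc hnba hnbb hzzne with h | h | h | h
      · rw [h] at hzzS; exact haS.1 hzzS
      · rw [h, ← hsa] at hzzS; exact haS.2 hzzS
      · rw [h] at hzzS; exact hbS.1 hzzS
      · rw [h, ← hsb] at hzzS; exact hbS.2 hzzS
    have hGood : Good.card ≤ S.toFinset.card := by
      apply Finset.card_le_card_of_injOn (fun u => if u ∈ S then u else suppVx G u)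
      · intro u hu
        rw [hGdef, Finset.mem_coe, Finset.mem_filter] at hu
        by_cases h : u ∈ S
        · simp only [if_pos h, Finset.mem_coe, Set.mem_toFinset]; exact h
        · simp only [if_neg h, Finset.mem_coe, Set.mem_toFinset]
          rcases hu.2 with h' | h'
          · exact absurd h' h
          · exact h'
      · intro a ha b hb hfab
        rw [Finset.mem_coe, hGdef, Finset.mem_filter] at ha hb
        obtain ⟨haT, haS⟩ := ha
        obtain ⟨hbT, hbS⟩ := hb
        obtain ⟨va, hnba, hsa, hdega⟩ := hT_elim a haT
        obtain ⟨vb, hnbb, hsb, hdegb⟩ := hT_elim b hbT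
        simp only at hfab
        by_cases h1 : a ∈ S <;> by_cases h2 : b ∈ S
        · rw [if_pos h1, if_pos h2] at hfab; exact hfab
        · rw [if_pos h1, if_neg h2] at hfab
          exfalso
          have hla : (G.neighborSet a).ncard = 1 := by rw [hnba]; simp
          rw [hfab, hsb] at hla
          omega
        · rw [if_neg h1, if_pos h2] at hfab
          exfalso
          have hlb : (G.neighborSet b).ncard = 1 := by rw [hnbb]; simp
          rw [← hfab, hsa] at hlb
          omega
        · rw [if_neg h1, if_neg h2] at hfab
          have hvv : va = vb := by rw [← hsa, ← hsb, hfab]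
          by_contra hab
          obtain ⟨zz, hzzS, hzzne⟩ := hS a b hab
          have hadja : G.Adj a va := by
            have : va ∈ G.neighborSet a := by rw [hnba]; exact rfl
            exact this
          have hadjb : G.Adj b vb := by
            have : vb ∈ G.neighborSet b := by rw [hnbb]; exact rfl
            exact this
          have e1 : G.distK 1 a va = 1 := distK_adj' hadja
          have e2 : G.distK 1 b va = 1 := by rw [hvv]; exact distK_adj' hadjb
          rcases resolver_mem hc hnba hnbb hzzne with h | h | h | h
          · rw [h] at hzzS; exact h1 hzzS
          · rw [h] at hzzne; exact hzzne (e1.trans e2.symm)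
          · rw [h] at hzzS; exact h2 hzzS
          · rw [h, ← hvv] at hzzne; exact hzzne (e1.trans e2.symm)
    have hfin : S.ncard = S.toFinset.card := Set.ncard_eq_toFinset_card' S
    omega
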